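/- Let N ≥ 2 be an integer, k := min(d, d'), and let U ∈ ℝ^{d×k} and V ∈ ℝ^{d'×k} have orthonormal columns (UᵀU = VᵀV = I_k), σ ∈ ℝ^k, M ∈ ℝ^{d×d'}. Then Uᵀ · T_N(U, σ, V, M) · V = G ⊙ (UᵀMV), where ⊙ is the Hadamard (entrywise) product and G ∈ ℝ^{k×k} is the matrix with entries G_{r,r'} = Σ_{j=1}^N (σ_r²)^{(j−1)/N} · (σ_{r'}²)^{(N−j)/N}. In particular, for every r, u_rᵀ · T_N(U, σ, V, M) · v_r = N · (σ_r²)^{(N−1)/N} · u_rᵀ M v_r, where u_r, v_r are the r-th columns of U, V. -/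

import Mathlib

open Matrix

/-- `dpow σ β` is the `k×k` diagonal matrix with `r`-th diagonal entry `(σᵣ²)^β`
(real power, with the convention `x⁰ = 1`). -/
noncomputable def dpow {k : ℕ} (σ : Fin k → ℝ) (β : ℝ) : Matrix (Fin k) (Fin k) ℝ :=
  Matrix.diagonal (fun r => (σ r ^ 2) ^ β)

/-- `TN N U σ V M` is the right-hand side of the gradient-flow dynamics of the product
matrix of a depth-`N` matrix factorization with balanced initialization, expressed
through a singular value decomposition `W = U·diag(σ)·Vᵀ`:
`M·V·D^((N−1)/N)·Vᵀ + Σ_{j=2}^{N−1} U·D^((j−1)/N)·Uᵀ·M·V·D^((N−j)/N)·Vᵀ + U·D^((N−1)/N)·Uᵀ·M`,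
where `D^β = dpow σ β`. -/
noncomputable def TN {d d' k : ℕ} (N : ℕ) (U : Matrix (Fin d) (Fin k) ℝ)
    (σ : Fin k → ℝ) (V : Matrix (Fin d') (Fin k) ℝ) (M : Matrix (Fin d) (Fin d') ℝ) :
    Matrix (Fin d) (Fin d') ℝ :=
  M * V * dpow σ (((N : ℝ) - 1) / N) * Vᵀ +
  (∑ j ∈ Finset.Icc 2 (N - 1),
    U * dpow σ (((j : ℝ) - 1) / N) * Uᵀ * M * V * dpow σ (((N : ℝ) - (j : ℝ)) / N) * Vᵀ) +
  U * dpow σ (((N : ℝ) - 1) / N) * Uᵀ * M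

/-- For orthonormal `U`, `V`: `Uᵀ·T_N(U,σ,V,M)·V = G ⊙ (UᵀMV)` where
`G_{r,r'} = Σ_{j=1}^N (σᵣ²)^((j−1)/N)·(σᵣ'²)^((N−j)/N)`; in particular the diagonal
entries satisfy `uᵣᵀ·T_N·vᵣ = N·(σᵣ²)^((N−1)/N)·uᵣᵀMvᵣ`. -/
theorem stmt9 {d d' : ℕ} (N : ℕ) (hN : 2 ≤ N)
    (U : Matrix (Fin d) (Fin (min d d')) ℝ) (V : Matrix (Fin d') (Fin (min d d')) ℝ)
    (hU : Uᵀ * U = 1) (hV : Vᵀ * V = 1)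
    (σ : Fin (min d d') → ℝ) (M : Matrix (Fin d) (Fin d') ℝ) :
    Uᵀ * TN N U σ V M * V =
      Matrix.hadamard
        (Matrix.of fun r r' : Fin (min d d') => ∑ j ∈ Finset.Icc 1 N,
          (σ r ^ 2) ^ (((j : ℝ) - 1) / N) * (σ r' ^ 2) ^ (((N : ℝ) - (j : ℝ)) / N))
        (Uᵀ * M * V) ∧
    ∀ r, (Uᵀ * TN N U σ V M * V) r r =
      (N : ℝ) * (σ r ^ 2) ^ (((N : ℝ) - 1) / N) * (Uᵀ * M * V) r r := by
  have hU' : ∀ X : Matrix (Fin (min d d')) (Fin d') ℝ, Uᵀ * (U * X) = X := fun X => by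
    rw [← Matrix.mul_assoc, hU, Matrix.one_mul]
  have key : Uᵀ * TN N U σ V M * V =
      (Uᵀ * M * V) * dpow σ (((N : ℝ) - 1) / N) +
      (∑ j ∈ Finset.Icc 2 (N - 1),
        dpow σ (((j : ℝ) - 1) / N) * (Uᵀ * M * V) * dpow σ (((N : ℝ) - (j : ℝ)) / N)) +
      dpow σ (((N : ℝ) - 1) / N) * (Uᵀ * M * V) := by
    simp only [TN, Matrix.add_mul, Matrix.mul_add, Matrix.sum_mul, Matrix.mul_sum,
      Matrix.mul_assoc, hV, Matrix.mul_one, hU']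
  have hsplit : Finset.Icc 1 N = insert 1 (insert N (Finset.Icc 2 (N - 1))) := by
    ext x
    simp only [Finset.mem_Icc, Finset.mem_insert]
    omega
  have h1 : (1:ℕ) ∉ insert N (Finset.Icc 2 (N - 1)) := by
    simp only [Finset.mem_insert, Finset.mem_Icc]; omega
  have h2 : N ∉ Finset.Icc 2 (N - 1) := by
    simp only [Finset.mem_Icc]; omega
  have main : Uᵀ * TN N U σ V M * V =
      Matrix.hadamard
        (Matrix.of fun r r' : Fin (min d d') => ∑ j ∈ Finset.Icc 1 N,
          (σ r ^ 2) ^ (((j : ℝ) - 1) / N) * (σ r' ^ 2) ^ (((N : ℝ) - (j : ℝ)) / N))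
        (Uᵀ * M * V) := by
    rw [key]
    ext r r'
    set A := Uᵀ * M * V with hA
    simp only [Matrix.add_apply, Matrix.sum_apply, dpow, Matrix.mul_diagonal,
      Matrix.diagonal_mul, Matrix.hadamard_apply, Matrix.of_apply, hsplit,
      Finset.sum_insert h1, Finset.sum_insert h2]
    have e1 : (((1:ℕ):ℝ) - 1) / N = 0 := by norm_num
    have e2 : (((N:ℕ):ℝ) - ((1:ℕ):ℝ)) / N = ((N:ℝ) - 1) / N := by norm_num
    have e3 : (((N:ℕ):ℝ) - ((N:ℕ):ℝ)) / N = 0 := by norm_num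
    rw [e1, e3, Real.rpow_zero, Real.rpow_zero]
    rw [add_mul, add_mul, Finset.sum_mul]
    have : ∀ j ∈ Finset.Icc 2 (N - 1),
        (σ r ^ 2) ^ (((j:ℝ) - 1) / N) * A r r' * (σ r' ^ 2) ^ (((N:ℝ) - (j:ℝ)) / N) =
        (σ r ^ 2) ^ (((j:ℝ) - 1) / N) * (σ r' ^ 2) ^ (((N:ℝ) - (j:ℝ)) / N) * A r r' := by
      intro j _; ring
    rw [Finset.sum_congr rfl this]
    push_cast
    ring
  refine ⟨main, fun r => ?_⟩
  rw [main]
  simp only [Matrix.hadamard_apply, Matrix.of_apply]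
  have hNne : (N:ℝ) ≠ 0 := by positivity
  have hc : ((N:ℝ) - 1) / N ≠ 0 := by
    have : (1:ℝ) ≤ (N:ℝ) - 1 := by
      have : (2:ℝ) ≤ (N:ℝ) := by exact_mod_cast hN
      linarith
    positivity
  have : ∀ j ∈ Finset.Icc 1 N,
      (σ r ^ 2) ^ (((j:ℝ) - 1) / N) * (σ r ^ 2) ^ (((N:ℝ) - (j:ℝ)) / N) =
      (σ r ^ 2) ^ (((N:ℝ) - 1) / N) := by
    intro j _
    have hadd : ((j:ℝ) - 1) / N + ((N:ℝ) - (j:ℝ)) / N = ((N:ℝ) - 1) / N := by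
      rw [← add_div]; ring_nf
    rw [← Real.rpow_add' (sq_nonneg _) (by rw [hadd]; exact hc), hadd]
  rw [Finset.sum_congr rfl this, Finset.sum_const, Nat.card_Icc, nsmul_eq_mul]
  have : (N + 1 - 1 : ℕ) = N := by omega
  rw [this]
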